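/- arXiv:1506.00193 — 2 statements merged into one kernel-verified Lean document; each statement's English description precedes it below -/
import Mathlib

section
/- Let X, Y be real random variables with E[X^2] = E[Y^2] = 1 and E[XY] = ρ, and let V satisfy the Markov chain X - V - Y. Define D_X = E[(X - E[X|V])^2] and D_Y = E[(Y - E[Y|V])^2]. Then ρ^2 ≤ (1 - D_X)(1 - D_Y). -/
open MeasureTheory ProbabilityTheory Real
open scoped ENNReal

section Aux

variable {Ω : Type*} {mΩ : MeasurableSpace Ω} {μ : Measure Ω}

lemma aux_integrable_mul {f g : Ω → ℝ} (hf : MemLp f 2 μ) (hg : MemLp g 2 μ) :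
    Integrable (fun ω => f ω * g ω) μ := by
  have h : (1 : ℝ≥0∞) / 1 = 1 / 2 + 1 / 2 := by
    rw [ENNReal.div_add_div_same, one_add_one_eq_two, ENNReal.div_self two_ne_zero ENNReal.ofNat_ne_top, one_div_one]
  have := memLp_one_iff_integrable.mp (hg.smul (r := 1) hf)
  exact (by simpa [Pi.smul_apply, smul_eq_mul] using this : Integrable (f * g) μ)

lemma aux_memℒp_condexp {m : MeasurableSpace Ω} (hm : m ≤ mΩ) [IsFiniteMeasure μ]
    {f : Ω → ℝ} (hf : MemLp f 2 μ) : MemLp (μ[f|m]) 2 μ := by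
  haveI : SigmaFinite (μ.trim hm) := by
    have : IsFiniteMeasure (μ.trim hm) := isFiniteMeasure_trim hm
    infer_instance
  have hgeq : (condExpL2 ℝ ℝ hm (hf.toLp f) : Ω → ℝ) =ᵐ[μ] μ[f|m] := by
    refine ae_eq_condExp_of_forall_setIntegral_eq hm (hf.integrable one_le_two)
      (fun s hs hμs => ?_) (fun s hs hμs => ?_) ?_
    · exact integrableOn_condExpL2_of_measure_ne_top hm hμs.ne _
    · rw [integral_condExpL2_eq hm (hf.toLp f) hs hμs.ne]
      exact integral_congr_ae (ae_restrict_of_ae hf.coeFn_toLp)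
    · exact aestronglyMeasurable_condExpL2 hm _
  have hmem : MemLp ((condExpL2 ℝ ℝ hm (hf.toLp f) : Lp ℝ 2 μ) : Ω → ℝ) 2 μ := Lp.memLp _
  exact hmem.ae_eq hgeq

lemma aux_cauchy_schwarz {f g : Ω → ℝ} (hf : MemLp f 2 μ) (hg : MemLp g 2 μ) :
    (∫ ω, f ω * g ω ∂μ) ^ 2 ≤ (∫ ω, f ω ^ 2 ∂μ) * (∫ ω, g ω ^ 2 ∂μ) := by
  have key := real_inner_mul_inner_self_le (hf.toLp f) (hg.toLp g)
  have h1 : (inner ℝ (hf.toLp f) (hg.toLp g) : ℝ) = ∫ ω, f ω * g ω ∂μ := by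
    rw [L2.inner_def]
    refine integral_congr_ae ?_
    filter_upwards [hf.coeFn_toLp, hg.coeFn_toLp] with ω h1 h2
    simp [h1, h2, RCLike.inner_apply, mul_comm]
  have h2 : (inner ℝ (hf.toLp f) (hf.toLp f) : ℝ) = ∫ ω, f ω ^ 2 ∂μ := by
    rw [L2.inner_def]
    refine integral_congr_ae ?_
    filter_upwards [hf.coeFn_toLp] with ω h1
    simp [h1, RCLike.inner_apply, sq]
  have h3 : (inner ℝ (hg.toLp g) (hg.toLp g) : ℝ) = ∫ ω, g ω ^ 2 ∂μ := by
    rw [L2.inner_def]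
    refine integral_congr_ae ?_
    filter_upwards [hg.coeFn_toLp] with ω h1
    simp [h1, RCLike.inner_apply, sq]
  rw [h1, h2, h3] at key
  simpa [sq] using key

lemma aux_var {m : MeasurableSpace Ω} (hm : m ≤ mΩ) [IsFiniteMeasure μ]
    {f : Ω → ℝ} (hf : MemLp f 2 μ) :
    ∫ ω, (f ω - (μ[f|m]) ω) ^ 2 ∂μ
      = ∫ ω, f ω ^ 2 ∂μ - ∫ ω, (μ[f|m]) ω ^ 2 ∂μ := by
  haveI : SigmaFinite (μ.trim hm) := by
    have : IsFiniteMeasure (μ.trim hm) := isFiniteMeasure_trim hm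
    infer_instance
  set c : Ω → ℝ := μ[f|m] with hc_def
  have hc : MemLp c 2 μ := aux_memℒp_condexp hm hf
  have h1 : Integrable (fun ω => f ω * c ω) μ := aux_integrable_mul hf hc
  have h1' : Integrable (fun ω => c ω * f ω) μ := by
    simpa [mul_comm] using h1
  have h2 : Integrable (fun ω => c ω ^ 2) μ := by
    simpa [sq] using aux_integrable_mul hc hc
  have h3 : Integrable (fun ω => f ω ^ 2) μ := by
    simpa [sq] using aux_integrable_mul hf hf
  have hpull : μ[c * f|m] =ᵐ[μ] c * μ[f|m] :=
    condExp_mul_of_aestronglyMeasurable_left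
      stronglyMeasurable_condExp.aestronglyMeasurable h1' (hf.integrable one_le_two)
  have hortho : ∫ ω, f ω * c ω ∂μ = ∫ ω, c ω ^ 2 ∂μ := by
    have e1 : ∫ ω, f ω * c ω ∂μ = ∫ ω, (c * f) ω ∂μ := by
      refine integral_congr_ae (Filter.Eventually.of_forall fun ω => ?_)
      simp [mul_comm]
    rw [e1, ← integral_condExp hm]
    refine integral_congr_ae (hpull.mono fun ω hω => ?_)
    simp only [hω, Pi.mul_apply, sq, ← hc_def]
  have hexp : ∀ ω, (f ω - c ω) ^ 2 = f ω ^ 2 - 2 * (f ω * c ω) + c ω ^ 2 := by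
    intro ω; ring
  have h4 : Integrable (fun ω => f ω ^ 2 - 2 * (f ω * c ω)) μ := h3.sub (h1.const_mul 2)
  simp_rw [hexp]
  rw [integral_add h4 h2, integral_sub h3 (h1.const_mul 2), integral_const_mul, hortho]
  ring

end Aux

/-- If `E[X²] = E[Y²] = 1`, `E[XY] = ρ`, and `X - V - Y` is a Markov chain
(conditional independence expressed via `E[XY|V] = E[X|V]·E[Y|V]` a.s.), then with
`D_X = E[(X - E[X|V])²]` and `D_Y = E[(Y - E[Y|V])²]` we have `ρ² ≤ (1 - D_X)(1 - D_Y)`. -/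
theorem stmt1 {Ω β : Type*} [MeasurableSpace Ω] [MeasurableSpace β]
    (μ : Measure Ω) [IsProbabilityMeasure μ]
    (X Y : Ω → ℝ) (V : Ω → β) (ρ : ℝ)
    (hX : MemLp X 2 μ) (hY : MemLp Y 2 μ) (hV : Measurable V)
    (hX2 : ∫ ω, X ω ^ 2 ∂μ = 1) (hY2 : ∫ ω, Y ω ^ 2 ∂μ = 1)
    (hρ : ∫ ω, X ω * Y ω ∂μ = ρ)
    (hMarkov : μ[fun ω => X ω * Y ω | MeasurableSpace.comap V inferInstance]
      =ᵐ[μ] fun ω => (μ[X | MeasurableSpace.comap V inferInstance]) ω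
        * (μ[Y | MeasurableSpace.comap V inferInstance]) ω)
    (DX DY : ℝ)
    (hDX : DX = ∫ ω, (X ω - (μ[X | MeasurableSpace.comap V inferInstance]) ω) ^ 2 ∂μ)
    (hDY : DY = ∫ ω, (Y ω - (μ[Y | MeasurableSpace.comap V inferInstance]) ω) ^ 2 ∂μ) :
    ρ ^ 2 ≤ (1 - DX) * (1 - DY) := by
  set m : MeasurableSpace Ω := MeasurableSpace.comap V inferInstance with hm_def
  have hm : m ≤ _ := hV.comap_le
  haveI : SigmaFinite (μ.trim hm) := by
    have : IsFiniteMeasure (μ.trim hm) := isFiniteMeasure_trim hm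
    infer_instance
  have hcX : MemLp (μ[X|m]) 2 μ := aux_memℒp_condexp hm hX
  have hcY : MemLp (μ[Y|m]) 2 μ := aux_memℒp_condexp hm hY
  have hXY : Integrable (fun ω => X ω * Y ω) μ := aux_integrable_mul hX hY
  have hρ' : ρ = ∫ ω, (μ[X|m]) ω * (μ[Y|m]) ω ∂μ := by
    rw [← hρ, ← integral_condExp hm (f := fun ω => X ω * Y ω)]
    exact integral_congr_ae hMarkov
  have hDX' : 1 - DX = ∫ ω, (μ[X|m]) ω ^ 2 ∂μ := by
    rw [hDX, aux_var hm hX, hX2]; ring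
  have hDY' : 1 - DY = ∫ ω, (μ[Y|m]) ω ^ 2 ∂μ := by
    rw [hDY, aux_var hm hY, hY2]; ring
  rw [hρ', hDX', hDY']
  exact aux_cauchy_schwarz hcX hcY
end

section
/- Fix λ ≥ 0 and ρ ∈ (0,1), and define f_λ(x) = (1-x)^{λ+1}(x - ρ^2)/x for x ∈ [ρ^2, 1]. Then f_λ attains its maximum on [ρ^2, 1] at x* = (λρ^2 + ρ·√(λ^2ρ^2 + 4(λ+1))) / (2(λ+1)). -/
open Real

/-- For `λ ≥ 0` and `ρ ∈ (0,1)`, the function `f_λ(x) = (1-x)^{λ+1}(x-ρ²)/x` attains its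
maximum on `[ρ², 1]` at `x* = (λρ² + ρ√(λ²ρ² + 4(λ+1)))/(2(λ+1))`. -/
theorem stmt3 (l ρ : ℝ) (hl : 0 ≤ l) (hρ : ρ ∈ Set.Ioo (0 : ℝ) 1)
    (f : ℝ → ℝ) (hf : ∀ x, f x = (1 - x) ^ (l + 1) * (x - ρ ^ 2) / x)
    (xstar : ℝ)
    (hx : xstar = (l * ρ ^ 2 + ρ * Real.sqrt (l ^ 2 * ρ ^ 2 + 4 * (l + 1))) / (2 * (l + 1))) :
    xstar ∈ Set.Icc (ρ ^ 2) 1 ∧ ∀ x ∈ Set.Icc (ρ ^ 2) 1, f x ≤ f xstar := by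
  obtain ⟨hρ0, hρ1⟩ := hρ
  have hl1 : (0:ℝ) < l + 1 := by linarith
  set s : ℝ := Real.sqrt (l ^ 2 * ρ ^ 2 + 4 * (l + 1)) with hsdef
  have hs2 : s ^ 2 = l ^ 2 * ρ ^ 2 + 4 * (l + 1) := Real.sq_sqrt (by positivity)
  have hs0 : 0 < s := Real.sqrt_pos.mpr (by positivity)
  have ha0 : (0:ℝ) < ρ ^ 2 := by positivity
  have ha1 : ρ ^ 2 < 1 := by nlinarith
  -- key algebraic facts
  have key : 2 * (l + 1) * xstar = l * ρ ^ 2 + ρ * s := by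
    rw [hx]; field_simp
  have hX0 : 0 < xstar := by nlinarith [mul_pos hρ0 hs0, mul_nonneg hl ha0.le]
  have hroot : (l + 1) * xstar ^ 2 - l * ρ ^ 2 * xstar - ρ ^ 2 = 0 := by
    have h4 : 4 * (l + 1) * ((l + 1) * xstar ^ 2 - l * ρ ^ 2 * xstar - ρ ^ 2) = 0 := by
      linear_combination (2 * (l + 1) * xstar - l * ρ ^ 2 + ρ * s) * key + ρ ^ 2 * hs2
    have h4' : (4 * (l + 1) : ℝ) ≠ 0 := by positivity
    exact (mul_eq_zero.mp h4).resolve_left h4'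
  have hlX : l * ρ ^ 2 < (l + 1) * xstar := by
    -- since s > l * ρ
    have hslρ : l * ρ < s := by
      nlinarith [sq_nonneg (s - l * ρ)]
    nlinarith [key, mul_pos hρ0 hs0]
  have hX1 : ρ ^ 2 < xstar := by
    nlinarith [hroot, hlX, mul_pos ha0 (sub_pos.mpr ha1)]
  have hXlt1 : xstar < 1 := by
    nlinarith [hroot, hlX]
  -- sign of q(x) = -(l+1)x^2 + l ρ^2 x + ρ^2
  have hqpos : ∀ x : ℝ, 0 < x → x < xstar → 0 < -(l + 1) * x ^ 2 + l * ρ ^ 2 * x + ρ ^ 2 := by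
    intro x hx0 hxX
    nlinarith [hroot, hlX, mul_pos (sub_pos.mpr hxX) (mul_pos hl1 hx0)]
  have hqneg : ∀ x : ℝ, xstar < x → -(l + 1) * x ^ 2 + l * ρ ^ 2 * x + ρ ^ 2 < 0 := by
    intro x hxX
    nlinarith [hroot, hlX, mul_pos (sub_pos.mpr hxX) (mul_pos hl1 (hX0.trans hxX))]
  -- rewrite f
  have hfe : f = fun x => (1 - x) ^ (l + 1) * (x - ρ ^ 2) / x := funext hf
  -- derivative
  have hder : ∀ x : ℝ, 0 < x → x < 1 →
      HasDerivAt f ((1 - x) ^ l * (-(l + 1) * x ^ 2 + l * ρ ^ 2 * x + ρ ^ 2) / x ^ 2) x := by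
    intro x hx0 hx1
    have h1x : (0:ℝ) < 1 - x := by linarith
    have h1 : HasDerivAt (fun y : ℝ => 1 - y) (-1) x := ((hasDerivAt_id x).const_sub 1)
    have h2 : HasDerivAt (fun y : ℝ => (1 - y) ^ (l + 1)) ((-1 + -l) * (1 - x) ^ l) x := by
      have := h1.rpow_const (p := l + 1) (Or.inl h1x.ne')
      simpa using this
    have h3 := (h2.mul ((hasDerivAt_id x).sub_const (ρ ^ 2))).div (hasDerivAt_id x) hx0.ne'
    rw [hfe]
    refine HasDerivAt.congr_deriv h3 ?_
    have hpow : (1 - x) ^ (l + 1) = (1 - x) ^ l * (1 - x) := Real.rpow_add_one h1x.ne' l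
    simp only [id_eq, mul_one, Pi.mul_apply]
    rw [hpow]
    field_simp
    ring
  -- continuity of f on [ρ², 1]
  have hcont : ContinuousOn f (Set.Icc (ρ ^ 2) 1) := by
    rw [hfe]
    apply ContinuousOn.div
    · exact (((continuous_const.sub continuous_id).rpow_const
        (fun x => Or.inr (by linarith))).continuousOn).mul
        ((continuous_id.sub continuous_const).continuousOn)
    · exact continuousOn_id
    · intro x hxm
      exact (lt_of_lt_of_le ha0 hxm.1).ne'
  -- monotone on [ρ², xstar]
  have hmono : StrictMonoOn f (Set.Icc (ρ ^ 2) xstar) := by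
    apply strictMonoOn_of_deriv_pos (convex_Icc _ _)
      (hcont.mono (Set.Icc_subset_Icc le_rfl hXlt1.le))
    intro x hxm
    rw [interior_Icc] at hxm
    have hx0 : 0 < x := ha0.trans hxm.1
    have hx1 : x < 1 := hxm.2.trans hXlt1
    rw [(hder x hx0 hx1).deriv]
    have := hqpos x hx0 hxm.2
    have hp : 0 < (1 - x) ^ l := Real.rpow_pos_of_pos (by linarith) l
    positivity
  -- anti on [xstar, 1]
  have hanti : StrictAntiOn f (Set.Icc xstar 1) := by
    apply strictAntiOn_of_deriv_neg (convex_Icc _ _)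
      (hcont.mono (Set.Icc_subset_Icc hX1.le le_rfl))
    intro x hxm
    rw [interior_Icc] at hxm
    have hx0 : 0 < x := hX0.trans hxm.1
    rw [(hder x hx0 hxm.2).deriv]
    have hq := hqneg x hxm.1
    have hp : 0 < (1 - x) ^ l := Real.rpow_pos_of_pos (by linarith [hxm.2]) l
    have hx2 : 0 < x ^ 2 := by positivity
    exact div_neg_of_neg_of_pos (mul_neg_of_pos_of_neg hp hq) hx2
  refine ⟨⟨hX1.le, hXlt1.le⟩, fun x hxm => ?_⟩
  rcases le_total x xstar with h | h
  · exact hmono.monotoneOn ⟨hxm.1, h⟩ ⟨hX1.le, le_rfl⟩ h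
  · exact hanti.antitoneOn ⟨le_rfl, hXlt1.le⟩ ⟨h, hxm.2⟩ h
end
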